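/- Let H be Hermitian, A an operator with operator norm ‖A‖_∞, ρ an operator with trace norm ‖ρ‖₁ = 1, and define f(U) = Tr(A e^{-itUHU†} ρ e^{itUHU†}) for unitary U and fixed t ∈ ℝ. Then for any unitaries U, V: |f(U) − f(V)| ≤ 4‖A‖_∞ ‖U − V‖_∞. -/

import Mathlib

open scoped ComplexOrder
open Matrix

/-- The operator (spectral) norm of a complex matrix. -/
noncomputable def opNorm {d : ℕ} (A : Matrix (Fin d) (Fin d) ℂ) : ℝ :=
  ‖(Matrix.toEuclideanCLM (𝕜 := ℂ) A : EuclideanSpace ℂ (Fin d) →L[ℂ] EuclideanSpace ℂ (Fin d))‖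

/-- The singular values of a complex matrix: square roots of the eigenvalues of `Aᴴ * A`. -/
noncomputable def singularValues {d : ℕ} (A : Matrix (Fin d) (Fin d) ℂ) : Fin d → ℝ :=
  fun i => Real.sqrt ((Matrix.posSemidef_conjTranspose_mul_self A).1.eigenvalues i)

/-- The trace norm (Schatten 1-norm) of a complex matrix. -/
noncomputable def traceNorm {d : ℕ} (A : Matrix (Fin d) (Fin d) ℂ) : ℝ :=
  ∑ i, singularValues A i

/-- The Schatten `p`-norm of a complex matrix. -/
noncomputable def schattenNorm {d : ℕ} (p : ℝ) (A : Matrix (Fin d) (Fin d) ℂ) : ℝ :=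
  (∑ i, singularValues A i ^ p) ^ (1 / p)


section helper
open scoped Matrix.Norms.L2Operator

lemma opNorm_eq {d : ℕ} (A : Matrix (Fin d) (Fin d) ℂ) : opNorm A = ‖A‖ := rfl

lemma opNorm_mul_le {d : ℕ} (A B : Matrix (Fin d) (Fin d) ℂ) :
    opNorm (A * B) ≤ opNorm A * opNorm B := by
  simpa only [opNorm_eq] using Matrix.l2_opNorm_mul A B

lemma opNorm_conjT {d : ℕ} (A : Matrix (Fin d) (Fin d) ℂ) : opNorm Aᴴ = opNorm A := by
  simpa only [opNorm_eq] using Matrix.l2_opNorm_conjTranspose A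

lemma opNorm_add_le {d : ℕ} (A B : Matrix (Fin d) (Fin d) ℂ) :
    opNorm (A + B) ≤ opNorm A + opNorm B := by
  simpa only [opNorm_eq] using norm_add_le A B

lemma opNorm_nonneg {d : ℕ} (A : Matrix (Fin d) (Fin d) ℂ) : 0 ≤ opNorm A :=
  norm_nonneg _

lemma opNorm_unitary_le {d : ℕ} {U : Matrix (Fin d) (Fin d) ℂ}
    (hU : U ∈ Matrix.unitaryGroup (Fin d) ℂ) : opNorm U ≤ 1 := by
  have h1 : star U * U = 1 := Matrix.mem_unitaryGroup_iff'.mp hU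
  have h2 : ‖star U * U‖ = ‖U‖ * ‖U‖ := CStarRing.norm_star_mul_self
  have h3 : ‖(1 : Matrix (Fin d) (Fin d) ℂ)‖ ≤ 1 := by
    rw [Matrix.cstar_norm_def, _root_.map_one]
    exact ContinuousLinearMap.norm_id_le
  rw [h1] at h2
  rw [opNorm_eq]
  nlinarith [norm_nonneg U]

lemma trace_mul_le {d : ℕ} (M R : Matrix (Fin d) (Fin d) ℂ) :
    ‖(M * R).trace‖ ≤ opNorm M * traceNorm R := by
  classical
  set hB := (Matrix.posSemidef_conjTranspose_mul_self R).1 with hBdef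
  set b := hB.eigenvectorBasis with hbdef
  set Vm : Matrix (Fin d) (Fin d) ℂ := ↑hB.eigenvectorUnitary with hV
  have hVmem : Vm ∈ Matrix.unitaryGroup (Fin d) ℂ := hB.eigenvectorUnitary.2
  have hVV : Vm * star Vm = 1 := Matrix.mem_unitaryGroup_iff.mp hVmem
  have key : (M * R).trace
      = ∑ j, (star (fun i => Vm i j)) ⬝ᵥ ((M * R) *ᵥ (fun i => Vm i j)) := by
    have h1 : (M * R).trace = (star Vm * (M * R) * Vm).trace := by
      rw [Matrix.trace_mul_cycle, ← Matrix.mul_assoc, hVV, one_mul]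
    rw [h1]
    simp only [Matrix.trace, Matrix.diag, Matrix.mul_apply, dotProduct, Matrix.mulVec,
      Matrix.star_apply, Pi.star_apply, Finset.sum_mul, Finset.mul_sum]
    refine Finset.sum_congr rfl fun j _ => ?_
    rw [Finset.sum_comm]
    exact Finset.sum_congr rfl fun k _ => Finset.sum_congr rfl fun l _ =>
      Finset.sum_congr rfl fun m _ => by ring
  have hcol : ∀ j, (fun i => Vm i j) = (WithLp.equiv 2 _) (b j) := by
    intro j
    funext i
    exact hB.eigenvectorUnitary_apply i j
  have hterm : ∀ j, ‖(star (fun i => Vm i j)) ⬝ᵥ ((M * R) *ᵥ (fun i => Vm i j))‖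
      ≤ opNorm M * singularValues R j := by
    intro j
    rw [hcol j]
    set x : EuclideanSpace ℂ (Fin d) := b j with hx
    set w : Fin d → ℂ := (WithLp.equiv 2 _) x with hw
    have hx1 : ‖x‖ = 1 := b.orthonormal.1 j
    set y : EuclideanSpace ℂ (Fin d) := (EuclideanSpace.equiv (Fin d) ℂ).symm (R *ᵥ w) with hy
    have hyw : (WithLp.equiv 2 (Fin d → ℂ)) y = R *ᵥ w := rfl
    have hsmul : hB.eigenvalues j • w = ((hB.eigenvalues j : ℝ) : ℂ) • w := by
      funext i; simp [Complex.real_smul]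
    have hinner : (inner ℂ y y : ℂ) = ((hB.eigenvalues j : ℝ) : ℂ) := by
      rw [EuclideanSpace.inner_eq_star_dotProduct, dotProduct_comm, show y.ofLp = R *ᵥ w from hyw,
        Matrix.star_mulVec,
        Matrix.dotProduct_mulVec, Matrix.vecMul_vecMul, ← Matrix.dotProduct_mulVec,
        show (Rᴴ * R) *ᵥ w = hB.eigenvalues j • w from hB.mulVec_eigenvectorBasis j,
        hsmul, dotProduct_smul, smul_eq_mul]
      have : (star w) ⬝ᵥ w = (inner ℂ x x : ℂ) := by
        exact ((EuclideanSpace.inner_eq_star_dotProduct x x).trans (dotProduct_comm _ _)).symm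
      rw [this, inner_self_eq_norm_sq_to_K, hx1]
      simp
    have hyn : ‖y‖ = singularValues R j := by
      have h3 : ‖y‖ ^ 2 = hB.eigenvalues j := by
        have h4 := inner_self_eq_norm_sq (𝕜 := ℂ) y
        rw [hinner] at h4
        simpa using h4.symm
      have h5 : singularValues R j = Real.sqrt (hB.eigenvalues j) := rfl
      rw [h5, ← h3, Real.sqrt_sq (norm_nonneg y)]
    set z : EuclideanSpace ℂ (Fin d) := (EuclideanSpace.equiv (Fin d) ℂ).symm (M *ᵥ (R *ᵥ w)) with hz
    have hterm_eq : (star w) ⬝ᵥ ((M * R) *ᵥ w) = (inner ℂ x z : ℂ) := by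
      rw [EuclideanSpace.inner_eq_star_dotProduct, dotProduct_comm z.ofLp, ← Matrix.mulVec_mulVec]
      rfl
    rw [hterm_eq]
    have hzb : ‖z‖ ≤ opNorm M * ‖y‖ := Matrix.l2_opNorm_mulVec M y
    calc ‖(inner ℂ x z : ℂ)‖ ≤ ‖x‖ * ‖z‖ := norm_inner_le_norm x z
      _ = ‖z‖ := by rw [hx1, one_mul]
      _ ≤ opNorm M * ‖y‖ := hzb
      _ = opNorm M * singularValues R j := by rw [hyn]
  calc ‖(M * R).trace‖ = ‖∑ j, (star (fun i => Vm i j)) ⬝ᵥ ((M * R) *ᵥ (fun i => Vm i j))‖ := by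
        rw [key]
    _ ≤ ∑ j, ‖(star (fun i => Vm i j)) ⬝ᵥ ((M * R) *ᵥ (fun i => Vm i j))‖ := norm_sum_le _ _
    _ ≤ ∑ j, opNorm M * singularValues R j := Finset.sum_le_sum fun j _ => hterm j
    _ = opNorm M * traceNorm R := by rw [traceNorm, Finset.mul_sum]

end helper

/-- For Hermitian `H`, an operator `A`, a state `ρ` with `‖ρ‖₁ = 1`, fixed `t ∈ ℝ`,
and `f(U) = Tr(A e^{-itUHU†} ρ e^{itUHU†})`, any unitaries `U, V` satisfy
`|f(U) − f(V)| ≤ 4‖A‖_∞ ‖U − V‖_∞`. -/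


theorem stmt_6 {d : ℕ} (H A ρ : Matrix (Fin d) (Fin d) ℂ) (hH : H.IsHermitian)
    (hρ : traceNorm ρ = 1) (t : ℝ)
    (f : Matrix (Fin d) (Fin d) ℂ → ℂ)
    (hf : ∀ W : Matrix (Fin d) (Fin d) ℂ,
      f W = (A * NormedSpace.exp ((-(t * Complex.I)) • (W * H * Wᴴ)) * ρ *
        NormedSpace.exp ((t * Complex.I) • (W * H * Wᴴ))).trace)
    (U V : Matrix (Fin d) (Fin d) ℂ)
    (hU : U ∈ Matrix.unitaryGroup (Fin d) ℂ) (hV : V ∈ Matrix.unitaryGroup (Fin d) ℂ) :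
    ‖f U - f V‖ ≤ 4 * opNorm A * opNorm (U - V) := by
  classical
  set c : ℂ := -(t * Complex.I) with hc
  set W : Matrix (Fin d) (Fin d) ℂ := NormedSpace.exp (c • H) with hWdef
  have hstarW : Wᴴ = NormedSpace.exp ((t * Complex.I) • H) := by
    rw [hWdef, ← Matrix.exp_conjTranspose, Matrix.conjTranspose_smul, hH.eq]
    congr 1
    simp [hc, Complex.star_def, Complex.conj_ofReal]
  have hWmem : W ∈ Matrix.unitaryGroup (Fin d) ℂ := by
    rw [Matrix.mem_unitaryGroup_iff', Matrix.star_eq_conjTranspose, hstarW, hWdef,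
      ← Matrix.exp_add_of_commute]
    · rw [show (t * Complex.I) • H + c • H = 0 by rw [← add_smul, hc]; simp]
      exact NormedSpace.exp_zero
    · exact ((Commute.refl H).smul_left _).smul_right _
  have hconj : ∀ (P : Matrix (Fin d) (Fin d) ℂ), P ∈ Matrix.unitaryGroup (Fin d) ℂ → ∀ z : ℂ,
      NormedSpace.exp (z • (P * H * Pᴴ)) = P * NormedSpace.exp (z • H) * Pᴴ := by
    intro P hP z
    have h1 : P * Pᴴ = 1 := by
      rw [← Matrix.star_eq_conjTranspose]; exact Matrix.mem_unitaryGroup_iff.mp hP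
    have h2 : Pᴴ * P = 1 := by
      rw [← Matrix.star_eq_conjTranspose]; exact Matrix.mem_unitaryGroup_iff'.mp hP
    set Pu : (Matrix (Fin d) (Fin d) ℂ)ˣ := ⟨P, Pᴴ, h1, h2⟩ with hPu
    have h4 := Matrix.exp_units_conj Pu (z • H)
    have hcoe : ((Pu⁻¹ : (Matrix (Fin d) (Fin d) ℂ)ˣ) : Matrix (Fin d) (Fin d) ℂ) = Pᴴ := rfl
    have hcoe2 : ((Pu : (Matrix (Fin d) (Fin d) ℂ)ˣ) : Matrix (Fin d) (Fin d) ℂ) = P := rfl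
    rw [hcoe, hcoe2] at h4
    rw [show z • (P * H * Pᴴ) = P * (z • H) * Pᴴ by rw [Matrix.mul_smul, Matrix.smul_mul], h4]
  set X : Matrix (Fin d) (Fin d) ℂ := U * W * Uᴴ with hXdef
  set Y : Matrix (Fin d) (Fin d) ℂ := V * W * Vᴴ with hYdef
  have hXH : ∀ (P : Matrix (Fin d) (Fin d) ℂ), (P * W * Pᴴ)ᴴ = P * Wᴴ * Pᴴ := by
    intro P
    simp [Matrix.conjTranspose_mul, Matrix.mul_assoc]
  have hfP : ∀ (P : Matrix (Fin d) (Fin d) ℂ), P ∈ Matrix.unitaryGroup (Fin d) ℂ →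
      f P = (A * (P * W * Pᴴ) * ρ * (P * W * Pᴴ)ᴴ).trace := by
    intro P hP
    rw [hf P, hconj P hP, hconj P hP, hXH P, ← hWdef, ← hstarW]
  have hfU : f U = (A * X * ρ * Xᴴ).trace := hfP U hU
  have hfV : f V = (A * Y * ρ * Yᴴ).trace := hfP V hV
  -- unitarity of X and Y
  have hmemconj : ∀ (P : Matrix (Fin d) (Fin d) ℂ), P ∈ Matrix.unitaryGroup (Fin d) ℂ →
      P * W * Pᴴ ∈ Matrix.unitaryGroup (Fin d) ℂ := by
    intro P hP
    have h4 : Pᴴ ∈ Matrix.unitaryGroup (Fin d) ℂ := by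
      rw [← Matrix.star_eq_conjTranspose]; exact Unitary.star_mem hP
    exact mul_mem (mul_mem hP hWmem) h4
  have hXmem : X ∈ Matrix.unitaryGroup (Fin d) ℂ := hmemconj U hU
  have hYmem : Y ∈ Matrix.unitaryGroup (Fin d) ℂ := hmemconj V hV
  -- splitting
  have hsplit : f U - f V
      = ((Xᴴ * A * (X - Y)) * ρ).trace + (((Xᴴ - Yᴴ) * A * Y) * ρ).trace := by
    have e1 : (A * (X - Y) * ρ * Xᴴ).trace = ((Xᴴ * A * (X - Y)) * ρ).trace := by
      rw [Matrix.trace_mul_comm]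
      congr 1
      noncomm_ring
    have e2 : (A * Y * ρ * (Xᴴ - Yᴴ)).trace = (((Xᴴ - Yᴴ) * A * Y) * ρ).trace := by
      rw [Matrix.trace_mul_comm]
      congr 1
      noncomm_ring
    rw [hfU, hfV, ← e1, ← e2, ← Matrix.trace_sub, ← Matrix.trace_add]
    congr 1
    noncomm_ring
  -- norm bounds
  have hXY : opNorm (X - Y) ≤ 2 * opNorm (U - V) := by
    have hdecomp : X - Y = (U - V) * W * Uᴴ + V * W * (Uᴴ - Vᴴ) := by
      rw [hXdef, hYdef]; noncomm_ring
    have hb1 : opNorm ((U - V) * W * Uᴴ) ≤ opNorm (U - V) := by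
      have h6 := opNorm_unitary_le hWmem
      have h7 : opNorm Uᴴ ≤ 1 := by rw [opNorm_conjT]; exact opNorm_unitary_le hU
      have h12 : opNorm ((U - V) * W) ≤ opNorm (U - V) :=
        (opNorm_mul_le _ _).trans (mul_le_of_le_one_right (opNorm_nonneg _) h6)
      calc opNorm ((U - V) * W * Uᴴ) ≤ opNorm ((U - V) * W) * opNorm Uᴴ := opNorm_mul_le _ _
        _ ≤ opNorm (U - V) * 1 := mul_le_mul h12 h7 (opNorm_nonneg _) (opNorm_nonneg _)
        _ = opNorm (U - V) := mul_one _
    have hb2 : opNorm (V * W * (Uᴴ - Vᴴ)) ≤ opNorm (U - V) := by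
      have hUV : opNorm (Uᴴ - Vᴴ) = opNorm (U - V) := by
        rw [← Matrix.conjTranspose_sub, opNorm_conjT]
      have h12 : opNorm (V * W) ≤ 1 :=
        (opNorm_mul_le _ _).trans
          (mul_le_one₀ (opNorm_unitary_le hV) (opNorm_nonneg _) (opNorm_unitary_le hWmem))
      calc opNorm (V * W * (Uᴴ - Vᴴ)) ≤ opNorm (V * W) * opNorm (Uᴴ - Vᴴ) := opNorm_mul_le _ _
        _ ≤ 1 * opNorm (Uᴴ - Vᴴ) := mul_le_mul_of_nonneg_right h12 (opNorm_nonneg _)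
        _ = opNorm (U - V) := by rw [one_mul, hUV]
    calc opNorm (X - Y) ≤ opNorm ((U - V) * W * Uᴴ) + opNorm (V * W * (Uᴴ - Vᴴ)) := by
          rw [hdecomp]; exact opNorm_add_le _ _
      _ ≤ 2 * opNorm (U - V) := by nlinarith
  have key1 : ‖((Xᴴ * A * (X - Y)) * ρ).trace‖ ≤ opNorm A * opNorm (X - Y) := by
    have h1 := trace_mul_le (Xᴴ * A * (X - Y)) ρ
    rw [hρ, mul_one] at h1
    refine h1.trans ?_
    have h3 : opNorm Xᴴ ≤ 1 := by rw [opNorm_conjT]; exact opNorm_unitary_le hXmem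
    have h13 : opNorm (Xᴴ * A) ≤ opNorm A :=
      (opNorm_mul_le _ _).trans (by
        have := mul_le_mul_of_nonneg_right h3 (opNorm_nonneg A)
        simpa using this)
    calc opNorm (Xᴴ * A * (X - Y)) ≤ opNorm (Xᴴ * A) * opNorm (X - Y) := opNorm_mul_le _ _
      _ ≤ opNorm A * opNorm (X - Y) := mul_le_mul_of_nonneg_right h13 (opNorm_nonneg _)
  have key2 : ‖(((Xᴴ - Yᴴ) * A * Y) * ρ).trace‖ ≤ opNorm A * opNorm (X - Y) := by
    have h1 := trace_mul_le ((Xᴴ - Yᴴ) * A * Y) ρ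
    rw [hρ, mul_one] at h1
    refine h1.trans ?_
    have hUV : opNorm (Xᴴ - Yᴴ) = opNorm (X - Y) := by
      rw [← Matrix.conjTranspose_sub, opNorm_conjT]
    have h3 : opNorm Y ≤ 1 := opNorm_unitary_le hYmem
    have h13 : opNorm ((Xᴴ - Yᴴ) * A) ≤ opNorm (X - Y) * opNorm A :=
      (opNorm_mul_le _ _).trans (by rw [hUV])
    calc opNorm ((Xᴴ - Yᴴ) * A * Y) ≤ opNorm ((Xᴴ - Yᴴ) * A) * opNorm Y := opNorm_mul_le _ _
      _ ≤ (opNorm (X - Y) * opNorm A) * 1 :=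
          mul_le_mul h13 h3 (opNorm_nonneg _) (mul_nonneg (opNorm_nonneg _) (opNorm_nonneg _))
      _ = opNorm A * opNorm (X - Y) := by ring
  have htotal : ‖f U - f V‖ ≤ 2 * (opNorm A * opNorm (X - Y)) := by
    rw [hsplit]
    calc ‖((Xᴴ * A * (X - Y)) * ρ).trace + (((Xᴴ - Yᴴ) * A * Y) * ρ).trace‖
        ≤ ‖((Xᴴ * A * (X - Y)) * ρ).trace‖ + ‖(((Xᴴ - Yᴴ) * A * Y) * ρ).trace‖ := norm_add_le _ _
      _ ≤ 2 * (opNorm A * opNorm (X - Y)) := by nlinarith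
  have hA0 := opNorm_nonneg A
  have hXY0 := opNorm_nonneg (X - Y)
  have hUV0 := opNorm_nonneg (U - V)
  nlinarith
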